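/- arXiv:2010.10414 — 2 statements merged into one kernel-verified Lean document; each statement's English description precedes it below -/
import Mathlib

section
/- Let m and n be nonzero integers with |m| ≠ |n| and let BS(m,n) = ⟨x, t ∣ t⁻¹ xᵐ t = xⁿ⟩. If N is a normal subgroup of BS(m,n) that is not contained in the normal closure of x, then there exists a positive integer q such that x^q ∈ N. -/
/-- The single defining relator of the Baumslag–Solitar group `BS(m,n)`:
`t⁻¹ xᵐ t (xⁿ)⁻¹`, where `x` and `t` are the two generators. -/
def bsRel (m n : ℤ) : Set (FreeGroup Bool) :=
  {(FreeGroup.of false)⁻¹ * (FreeGroup.of true) ^ m * FreeGroup.of false *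
    ((FreeGroup.of true) ^ n)⁻¹}

/-- The Baumslag–Solitar group `BS(m,n) = ⟨x, t ∣ t⁻¹ xᵐ t = xⁿ⟩`. -/
abbrev BS (m n : ℤ) : Type := PresentedGroup (bsRel m n)

/-- The generator `x` of `BS(m,n)`. -/
def BS.x (m n : ℤ) : BS m n := PresentedGroup.of true

/-- The generator `t` of `BS(m,n)`. -/
def BS.t (m n : ℤ) : BS m n := PresentedGroup.of false

namespace BSAux

/-- The defining relation holds in `BS(m,n)`. -/
lemma bs_rel (m n : ℤ) : (BS.t m n)⁻¹ * (BS.x m n) ^ m * BS.t m n = (BS.x m n) ^ n := by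
  have hmem : ((FreeGroup.of false)⁻¹ * (FreeGroup.of true) ^ m * FreeGroup.of false *
      ((FreeGroup.of true) ^ n)⁻¹ : FreeGroup Bool) ∈ Subgroup.normalClosure (bsRel m n) :=
    Subgroup.subset_normalClosure rfl
  have h1 : PresentedGroup.mk (bsRel m n) ((FreeGroup.of false)⁻¹ * (FreeGroup.of true) ^ m *
      FreeGroup.of false * ((FreeGroup.of true) ^ n)⁻¹) = 1 :=
    (QuotientGroup.eq_one_iff _).2 hmem
  rw [map_mul, map_mul, map_mul, map_inv, map_inv, map_zpow, map_zpow] at h1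
  have h2 : (BS.t m n)⁻¹ * (BS.x m n) ^ m * BS.t m n * ((BS.x m n) ^ n)⁻¹ = 1 := h1
  exact mul_inv_eq_one.mp h2

/-- The `t`-exponent homomorphism `BS(m,n) → ℤ` (multiplicatively). -/
def expT (m n : ℤ) : BS m n →* Multiplicative ℤ :=
  PresentedGroup.toGroup (f := fun b => Multiplicative.ofAdd (if b then 0 else 1)) (by
    rintro r hr
    rcases hr with rfl
    simp)

@[simp] lemma expT_x (m n : ℤ) : expT m n (BS.x m n) = 1 := by
  simp [expT, BS.x, PresentedGroup.toGroup.of]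

@[simp] lemma expT_t (m n : ℤ) : expT m n (BS.t m n) = Multiplicative.ofAdd 1 := by
  simp [expT, BS.t, PresentedGroup.toGroup.of]

/-- Key structural lemma: every element conjugates suitable powers of `x` to powers of `x`,
with ratio `(n/m)^d` where `d` is the `t`-exponent. -/
lemma key (m n : ℤ) (hm : m ≠ 0) (hn : n ≠ 0) (g : BS m n) :
    ∃ u v : ℤ, u ≠ 0 ∧ v ≠ 0 ∧
      (∀ c : ℤ, g⁻¹ * (BS.x m n) ^ (c * u) * g = (BS.x m n) ^ (c * v)) ∧
      (v : ℚ) * (m : ℚ) ^ (Multiplicative.toAdd (expT m n g)) =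
        (u : ℚ) * (n : ℚ) ^ (Multiplicative.toAdd (expT m n g)) := by
  have hmQ : (m : ℚ) ≠ 0 := by exact_mod_cast hm
  have hnQ : (n : ℚ) ≠ 0 := by exact_mod_cast hn
  have hg : g ∈ Subgroup.closure (Set.range (PresentedGroup.of : Bool → BS m n)) := by
    rw [PresentedGroup.closure_range_of]; trivial
  induction hg using Subgroup.closure_induction with
  | mem z hz =>
    obtain ⟨b, rfl⟩ := hz
    cases b with
    | true =>
      refine ⟨1, 1, one_ne_zero, one_ne_zero, ?_, ?_⟩
      · intro c
        have hX : PresentedGroup.of (rels := bsRel m n) true = BS.x m n := rfl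
        rw [hX]
        group
      · have hX : PresentedGroup.of (rels := bsRel m n) true = BS.x m n := rfl
        rw [hX, expT_x]
        simp
    | false =>
      refine ⟨m, n, hm, hn, ?_, ?_⟩
      · intro c
        have hT : PresentedGroup.of (rels := bsRel m n) false = BS.t m n := rfl
        rw [hT]
        have h1 : (BS.t m n)⁻¹ * (BS.x m n) ^ (c * m) * BS.t m n
            = ((BS.t m n)⁻¹ * (BS.x m n) ^ m * BS.t m n) ^ c := by
          rw [mul_comm c m, zpow_mul]
          rw [show (BS.t m n)⁻¹ * ((BS.x m n) ^ m) ^ c * BS.t m n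
              = (BS.t m n)⁻¹ * ((BS.x m n) ^ m) ^ c * ((BS.t m n)⁻¹)⁻¹ by rw [inv_inv],
            ← conj_zpow,
            show (BS.t m n)⁻¹ * (BS.x m n) ^ m * ((BS.t m n)⁻¹)⁻¹
              = (BS.t m n)⁻¹ * (BS.x m n) ^ m * BS.t m n by rw [inv_inv]]
        rw [h1, bs_rel, ← zpow_mul, mul_comm n c]
      · have hT : PresentedGroup.of (rels := bsRel m n) false = BS.t m n := rfl
        rw [hT, expT_t]
        simp [mul_comm]
  | one =>
    refine ⟨1, 1, one_ne_zero, one_ne_zero, ?_, by simp⟩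
    intro c; group
  | mul a b ha hb iha ihb =>
    obtain ⟨u, v, hu, hv, hca, hia⟩ := iha
    obtain ⟨u', v', hu', hv', hcb, hib⟩ := ihb
    refine ⟨u * u', v * v', mul_ne_zero hu hu', mul_ne_zero hv hv', ?_, ?_⟩
    · intro c
      calc (a * b)⁻¹ * (BS.x m n) ^ (c * (u * u')) * (a * b)
          = b⁻¹ * (a⁻¹ * (BS.x m n) ^ ((c * u') * u) * a) * b := by
            rw [show c * (u * u') = (c * u') * u by ring]; group
        _ = b⁻¹ * (BS.x m n) ^ ((c * u') * v) * b := by rw [hca]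
        _ = b⁻¹ * (BS.x m n) ^ ((c * v) * u') * b := by rw [show (c * u') * v = (c * v) * u' by ring]
        _ = (BS.x m n) ^ ((c * v) * v') := hcb _
        _ = (BS.x m n) ^ (c * (v * v')) := by rw [show (c * v) * v' = c * (v * v') by ring]
    · rw [map_mul, toAdd_mul, zpow_add₀ hmQ, zpow_add₀ hnQ]
      push_cast
      linear_combination ((v' : ℚ) * (m : ℚ) ^ (Multiplicative.toAdd (expT m n b))) * hia +
        ((u : ℚ) * (n : ℚ) ^ (Multiplicative.toAdd (expT m n a))) * hib
  | inv a ha iha =>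
    obtain ⟨u, v, hu, hv, hca, hia⟩ := iha
    refine ⟨v, u, hv, hu, ?_, ?_⟩
    · intro c
      rw [← hca c]
      group
    · rw [map_inv, toAdd_inv, zpow_neg, zpow_neg]
      have h1 : (m : ℚ) ^ (Multiplicative.toAdd (expT m n a)) ≠ 0 := zpow_ne_zero _ hmQ
      have h2 : (n : ℚ) ^ (Multiplicative.toAdd (expT m n a)) ≠ 0 := zpow_ne_zero _ hnQ
      field_simp
      linear_combination -hia

/-- If the `t`-exponent of `g` vanishes, then `g` lies in the normal closure of `x`. -/
lemma mem_ncl_of_expT_eq_one (m n : ℤ) (g : BS m n) (h1 : expT m n g = 1) :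
    g ∈ Subgroup.normalClosure ({BS.x m n} : Set (BS m n)) := by
  set H := Subgroup.normalClosure ({BS.x m n} : Set (BS m n)) with hH
  have hHnormal : H.Normal := Subgroup.normalClosure_normal
  let π := QuotientGroup.mk' H
  have hx1 : π (BS.x m n) = 1 := by
    rw [QuotientGroup.mk'_apply, QuotientGroup.eq_one_iff]
    exact Subgroup.subset_normalClosure rfl
  have hzp : π g ∈ Subgroup.zpowers (π (BS.t m n)) := by
    refine PresentedGroup.generated_by (bsRel m n)
      (Subgroup.comap π (Subgroup.zpowers (π (BS.t m n)))) ?_ g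
    intro j
    cases j with
    | true =>
      refine Subgroup.mem_comap.mpr ?_
      show π (BS.x m n) ∈ _
      rw [hx1]; exact one_mem _
    | false => exact Subgroup.mem_comap.mpr (Subgroup.mem_zpowers _)
  obtain ⟨k, hk⟩ := Subgroup.mem_zpowers_iff.mp hzp
  have hker : ∀ z ∈ H, expT m n z = 1 := by
    intro z hz
    refine Subgroup.normalClosure_le_normal (N := (expT m n).ker) ?_ hz
    rintro y rfl
    simp [MonoidHom.mem_ker]
  let φbar : BS m n ⧸ H →* Multiplicative ℤ := QuotientGroup.lift H (expT m n) hker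
  have hφπ : ∀ z : BS m n, φbar (π z) = expT m n z := fun z => rfl
  have h2 : φbar ((π (BS.t m n)) ^ k) = Multiplicative.ofAdd k := by
    rw [map_zpow, hφπ, expT_t]
    simp [← ofAdd_zsmul]
  have h3 : Multiplicative.ofAdd k = 1 := by
    rw [← h2, hk, hφπ, h1]
  have hk0 : k = 0 := by simpa using h3
  rw [hk0] at hk
  simp only [zpow_zero] at hk
  have : π g = 1 := hk.symm
  rwa [QuotientGroup.mk'_apply, QuotientGroup.eq_one_iff] at this

end BSAux

theorem power_of_x_mem_of_not_le_normalClosure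
    (m n : ℤ) (hm : m ≠ 0) (hn : n ≠ 0) (hmn : |m| ≠ |n|)
    (N : Subgroup (BS m n)) (hN : N.Normal)
    (h : ¬ N ≤ Subgroup.normalClosure ({BS.x m n} : Set (BS m n))) :
    ∃ q : ℕ, 0 < q ∧ (BS.x m n) ^ q ∈ N := by
  classical
  obtain ⟨g0, hg0N, hg0⟩ := SetLike.not_le_iff_exists.mp h
  have hd0 : Multiplicative.toAdd (BSAux.expT m n g0) ≠ 0 := by
    intro h0
    exact hg0 (BSAux.mem_ncl_of_expT_eq_one m n g0 (by
      have : BSAux.expT m n g0 = Multiplicative.ofAdd 0 := by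
        rw [← h0]; rfl
      simpa using this))
  -- get an element of N with positive t-exponent
  obtain ⟨g, hgN, e, he, hde⟩ : ∃ g ∈ N, ∃ e : ℕ, 0 < e ∧
      Multiplicative.toAdd (BSAux.expT m n g) = (e : ℤ) := by
    rcases lt_or_gt_of_ne hd0 with hneg | hpos
    · refine ⟨g0⁻¹, N.inv_mem hg0N, (-(Multiplicative.toAdd (BSAux.expT m n g0))).toNat, ?_, ?_⟩
      · omega
      · rw [map_inv, toAdd_inv]; omega
    · exact ⟨g0, hg0N, (Multiplicative.toAdd (BSAux.expT m n g0)).toNat, by omega, by omega⟩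
  obtain ⟨u, v, hu, hv, hconj, hinv⟩ := BSAux.key m n hm hn g
  rw [hde] at hinv
  rw [zpow_natCast, zpow_natCast] at hinv
  have hZ : v * m ^ e = u * n ^ e := by exact_mod_cast hinv
  have huv : u ≠ v := by
    intro heq
    subst heq
    have hmn' : m ^ e = n ^ e := mul_left_cancel₀ hu hZ
    have h4 : m.natAbs ^ e = n.natAbs ^ e := by
      rw [← Int.natAbs_pow, ← Int.natAbs_pow, hmn']
    have h5 : m.natAbs = n.natAbs := Nat.pow_left_injective (by omega) h4
    exact hmn (by rw [Int.abs_eq_natAbs, Int.abs_eq_natAbs, h5])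
  have hw : (BS.x m n) ^ (u - v) ∈ N := by
    have c1 : ((BS.x m n) ^ u)⁻¹ * g * (BS.x m n) ^ u ∈ N := by
      have := hN.conj_mem g hgN ((BS.x m n) ^ u)⁻¹
      simpa [inv_inv] using this
    have h1 : g⁻¹ * (((BS.x m n) ^ u)⁻¹ * g * (BS.x m n) ^ u) ∈ N :=
      N.mul_mem (N.inv_mem hgN) c1
    have h2 : g⁻¹ * (((BS.x m n) ^ u)⁻¹ * g * (BS.x m n) ^ u) = (BS.x m n) ^ (u - v) := by
      have h3 := hconj (-1)
      calc g⁻¹ * (((BS.x m n) ^ u)⁻¹ * g * (BS.x m n) ^ u)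
          = (g⁻¹ * (BS.x m n) ^ ((-1) * u) * g) * (BS.x m n) ^ u := by
            rw [show (-1 : ℤ) * u = -u by ring, zpow_neg]; group
        _ = (BS.x m n) ^ ((-1) * v) * (BS.x m n) ^ u := by rw [h3]
        _ = (BS.x m n) ^ (u - v) := by rw [← zpow_add]; ring_nf
    rwa [h2] at h1
  refine ⟨(u - v).natAbs, Int.natAbs_pos.2 (sub_ne_zero.2 huv), ?_⟩
  have hfin : (BS.x m n) ^ (((u - v).natAbs : ℤ)) ∈ N := by
    rcases Int.natAbs_eq (u - v) with hcase | hcase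
    · rw [show (((u - v).natAbs : ℤ)) = u - v from hcase.symm]
      exact hw
    · have : (((u - v).natAbs : ℤ)) = -(u - v) := by omega
      rw [this, zpow_neg]
      exact N.inv_mem hw
  rwa [zpow_natCast] at hfin
end

section
/- Let m and n be nonzero coprime integers with |m| ≠ |n| and let BS(m,n) = ⟨x, t ∣ t⁻¹ xᵐ t = xⁿ⟩. Let N be a normal subgroup of BS(m,n), and suppose there exist finitely many elements a₁, …, a_s of BS(m,n) such that every element g of BS(m,n) can be written as g = n₀ t^p a_j x^k for some n₀ ∈ N, integers p and k, and some j ∈ {1, …, s}. Then there exists a positive integer q such that x^q ∈ N; in particular, the quotient BS(m,n)/N is virtually cyclic. -/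
section KeyLemma

variable {G : Type*} [Group G] {Ω : Type*} [MulAction G Ω]

/-- A point of `Ω` whose stabilizer inside the powers of `u` is trivial. -/
def IsFreePt (u : G) (a : Ω) : Prop := ∀ j : ℤ, u ^ j • a = a → j = 0

lemma IsFreePt.unique {u : G} {a : Ω} (h : IsFreePt u a) {i j : ℤ}
    (hij : u ^ i • a = u ^ j • a) : i = j := by
  have h0 : u ^ (-j + i) • a = a := by
    rw [zpow_add, mul_smul, hij, ← mul_smul, ← zpow_add, neg_add_cancel, zpow_zero, one_smul]
  have := h _ h0
  omega

lemma IsFreePt.smul {u : G} {a : Ω} (h : IsFreePt u a) (k : ℤ) :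
    IsFreePt u (u ^ k • a) := by
  intro j hj
  have hj' : u ^ (j + k) • a = u ^ k • a := by
    rw [zpow_add, mul_smul]; exact hj
  have := h.unique hj'
  omega

variable (u : G) (Ω) in
/-- The relation "being in the same orbit of `u ^ w`" on free points. -/
def orbSetoid (w : ℤ) : Setoid {a : Ω // IsFreePt u a} where
  r a b := ∃ j : ℤ, u ^ (w * j) • a.val = b.val
  iseqv := by
    refine ⟨fun a => ⟨0, by simp⟩, ?_, ?_⟩
    · rintro a b ⟨j, hj⟩
      refine ⟨-j, ?_⟩
      rw [← hj, ← mul_smul, ← zpow_add]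
      simp
    · rintro a b c ⟨j, hj⟩ ⟨k, hk⟩
      refine ⟨j + k, ?_⟩
      rw [mul_add, add_comm, zpow_add, mul_smul, hj, hk]

variable (u : G) (Ω) in
/-- Quotient of free points by the orbit relation of `u ^ w`. -/
def OrbQ (w : ℤ) := Quotient (orbSetoid Ω u w)

variable (u : G) (Ω)

noncomputable def orbCls (a : {a : Ω // IsFreePt u a}) : OrbQ Ω u 1 :=
  Quotient.mk (orbSetoid Ω u 1) a

lemma orbCls_eq_of_rel {w : ℤ} {a b : {a : Ω // IsFreePt u a}}
    (h : (orbSetoid Ω u w).r a b) : orbCls Ω u a = orbCls Ω u b := by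
  obtain ⟨j, hj⟩ := h
  exact Quotient.sound ⟨w * j, by rw [one_mul]; exact hj⟩

noncomputable def orbRep (a : {a : Ω // IsFreePt u a}) : {a : Ω // IsFreePt u a} :=
  (orbCls Ω u a).out

lemma orbRep_spec (a : {a : Ω // IsFreePt u a}) :
    ∃ k : ℤ, u ^ k • (orbRep Ω u a).val = a.val := by
  obtain ⟨j, hj⟩ := Quotient.mk_out (s := orbSetoid Ω u 1) a
  exact ⟨1 * j, hj⟩

noncomputable def orbIdx (a : {a : Ω // IsFreePt u a}) : ℤ := (orbRep_spec Ω u a).choose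

lemma orbIdx_spec (a : {a : Ω // IsFreePt u a}) :
    u ^ (orbIdx Ω u a) • (orbRep Ω u a).val = a.val :=
  (orbRep_spec Ω u a).choose_spec

lemma orbRep_eq_of_cls {a b : {a : Ω // IsFreePt u a}} (h : orbCls Ω u a = orbCls Ω u b) :
    orbRep Ω u a = orbRep Ω u b := by
  unfold orbRep; rw [h]

lemma card_orbQ (w : ℤ) (hw : w ≠ 0) :
    Nat.card (OrbQ Ω u w) = Nat.card (OrbQ Ω u 1) * w.natAbs := by
  haveI : NeZero w.natAbs := ⟨by omega⟩
  set W := w.natAbs with hWdef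
  have hwW : ((w : ℤ) : ZMod W) = 0 :=
    (ZMod.intCast_zmod_eq_zero_iff_dvd w W).mpr (Int.natAbs_dvd.mpr dvd_rfl)
  have wd : ∀ a b : {a : Ω // IsFreePt u a}, (orbSetoid Ω u w).r a b →
      (orbCls Ω u a, ((orbIdx Ω u a : ℤ) : ZMod W)) =
        (orbCls Ω u b, ((orbIdx Ω u b : ℤ) : ZMod W)) := by
    rintro a b ⟨j, hj⟩
    have hcls : orbCls Ω u a = orbCls Ω u b := orbCls_eq_of_rel Ω u ⟨j, hj⟩
    have hrep : orbRep Ω u a = orbRep Ω u b := orbRep_eq_of_cls Ω u hcls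
    have h1 : u ^ (orbIdx Ω u b) • (orbRep Ω u a).val
        = u ^ (w * j + orbIdx Ω u a) • (orbRep Ω u a).val := by
      calc u ^ (orbIdx Ω u b) • (orbRep Ω u a).val
          = u ^ (orbIdx Ω u b) • (orbRep Ω u b).val := by rw [hrep]
        _ = b.val := orbIdx_spec Ω u b
        _ = u ^ (w * j) • a.val := hj.symm
        _ = u ^ (w * j) • (u ^ (orbIdx Ω u a) • (orbRep Ω u a).val) := by
            rw [orbIdx_spec]
        _ = u ^ (w * j + orbIdx Ω u a) • (orbRep Ω u a).val := by
            rw [zpow_add, mul_smul]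
    have h2 : orbIdx Ω u b = w * j + orbIdx Ω u a := (orbRep Ω u a).2.unique h1
    refine Prod.ext hcls ?_
    show ((orbIdx Ω u a : ℤ) : ZMod W) = ((orbIdx Ω u b : ℤ) : ZMod W)
    rw [h2]
    push_cast
    rw [hwW]
    ring
  let F : OrbQ Ω u w → OrbQ Ω u 1 × ZMod W :=
    Quotient.lift (fun a => (orbCls Ω u a, ((orbIdx Ω u a : ℤ) : ZMod W))) wd
  have hbij : Function.Bijective F := by
    constructor
    · intro c₁ c₂ h
      induction c₁ using Quotient.inductionOn with
      | h a =>
        induction c₂ using Quotient.inductionOn with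
        | h b =>
          have h' : (orbCls Ω u a, ((orbIdx Ω u a : ℤ) : ZMod W)) =
              (orbCls Ω u b, ((orbIdx Ω u b : ℤ) : ZMod W)) := h
          have hcls : orbCls Ω u a = orbCls Ω u b := (Prod.ext_iff.mp h').1
          have hidx : ((orbIdx Ω u a : ℤ) : ZMod W) = ((orbIdx Ω u b : ℤ) : ZMod W) :=
            (Prod.ext_iff.mp h').2
          have hdvd : ((W : ℕ) : ℤ) ∣ orbIdx Ω u b - orbIdx Ω u a :=
            Int.ModEq.dvd ((ZMod.intCast_eq_intCast_iff _ _ _).mp hidx)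
          have hdvd' : w ∣ orbIdx Ω u b - orbIdx Ω u a := Int.natAbs_dvd.mp hdvd
          obtain ⟨j, hj⟩ := hdvd'
          apply Quotient.sound
          refine ⟨j, ?_⟩
          have hrep : orbRep Ω u a = orbRep Ω u b := orbRep_eq_of_cls Ω u hcls
          have hexp : w * j + orbIdx Ω u a = orbIdx Ω u b := by linarith
          calc u ^ (w * j) • a.val
              = u ^ (w * j) • (u ^ orbIdx Ω u a • (orbRep Ω u a).val) := by
                rw [orbIdx_spec]
            _ = u ^ (w * j + orbIdx Ω u a) • (orbRep Ω u a).val := by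
                rw [zpow_add, mul_smul]
            _ = u ^ (orbIdx Ω u b) • (orbRep Ω u b).val := by rw [hexp, hrep]
            _ = b.val := orbIdx_spec Ω u b
    · rintro ⟨o, i⟩
      have hfree : IsFreePt u ((u ^ (i.val : ℤ)) • o.out.val) := o.out.2.smul _
      refine ⟨Quotient.mk _ ⟨u ^ (i.val : ℤ) • o.out.val, hfree⟩, ?_⟩
      have hcls : orbCls Ω u ⟨u ^ (i.val : ℤ) • o.out.val, hfree⟩ = o := by
        have hr : (orbSetoid Ω u 1).r o.out ⟨u ^ (i.val : ℤ) • o.out.val, hfree⟩ :=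
          ⟨(i.val : ℤ), by rw [one_mul]⟩
        exact (Quotient.sound hr).symm.trans (Quotient.out_eq o)
      have hrep : orbRep Ω u ⟨u ^ (i.val : ℤ) • o.out.val, hfree⟩ = o.out := by
        unfold orbRep; rw [hcls]
      have hidx : orbIdx Ω u ⟨u ^ (i.val : ℤ) • o.out.val, hfree⟩ = (i.val : ℤ) := by
        apply o.out.2.unique
        have h3 := orbIdx_spec Ω u ⟨u ^ (i.val : ℤ) • o.out.val, hfree⟩
        rw [hrep] at h3
        exact h3
      show (orbCls Ω u ⟨u ^ (i.val : ℤ) • o.out.val, hfree⟩,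
        ((orbIdx Ω u ⟨u ^ (i.val : ℤ) • o.out.val, hfree⟩ : ℤ) : ZMod W)) = (o, i)
      rw [hcls, hidx]
      refine Prod.ext rfl ?_
      show (((i.val : ℕ) : ℤ) : ZMod W) = i
      push_cast
      exact ZMod.natCast_rightInverse i
  calc Nat.card (OrbQ Ω u w) = Nat.card (OrbQ Ω u 1 × ZMod W) :=
        Nat.card_congr (Equiv.ofBijective F hbij)
    _ = Nat.card (OrbQ Ω u 1) * W := by rw [Nat.card_prod, Nat.card_zmod]


lemma card_orbQ_eq_conj (v : G) (m n : ℤ) (hm : m ≠ 0) (hn : n ≠ 0)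
    (hrel : v * u ^ m * v⁻¹ = u ^ n) :
    Nat.card (OrbQ Ω u m) = Nat.card (OrbQ Ω u n) := by
  have key : ∀ j : ℤ, v * u ^ (m * j) * v⁻¹ = u ^ (n * j) := by
    intro j
    rw [zpow_mul, zpow_mul, ← hrel, conj_zpow]
  have key' : ∀ (j : ℤ) (a : Ω), u ^ (n * j) • (v • a) = v • (u ^ (m * j) • a) := by
    intro j a
    rw [← mul_smul, ← mul_smul, ← key j]
    simp [mul_assoc]
  have key'' : ∀ (j : ℤ) (a : Ω), u ^ (m * j) • (v⁻¹ • a) = v⁻¹ • (u ^ (n * j) • a) := by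
    intro j a
    rw [← mul_smul, ← mul_smul]
    congr 1
    have h := key j
    rw [← h]
    group
  have hfix : ∀ (g : G) (a : Ω), g • a = a → ∀ k : ℤ, g ^ k • a = a := by
    intro g a h k
    exact (MulAction.stabilizer G a).zpow_mem (MulAction.mem_stabilizer_iff.mpr h) k
  have hPv : ∀ a : Ω, IsFreePt u a → IsFreePt u (v • a) := by
    intro a ha j hj
    have h1 : u ^ (n * j) • (v • a) = v • a := by
      have he : u ^ (n * j) = (u ^ j) ^ n := by rw [← zpow_mul, mul_comm]
      rw [he]
      exact hfix _ _ hj n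
    rw [key' j a] at h1
    have h2 : u ^ (m * j) • a = a := smul_left_cancel v h1
    have h3 := ha _ h2
    rcases mul_eq_zero.mp h3 with h | h
    · exact absurd h hm
    · exact h
  have hPvinv : ∀ a : Ω, IsFreePt u a → IsFreePt u (v⁻¹ • a) := by
    intro a ha j hj
    have h1 : u ^ (m * j) • (v⁻¹ • a) = v⁻¹ • a := by
      have he : u ^ (m * j) = (u ^ j) ^ m := by rw [← zpow_mul, mul_comm]
      rw [he]
      exact hfix _ _ hj m
    rw [key'' j a] at h1
    have h2 : u ^ (n * j) • a = a := smul_left_cancel v⁻¹ h1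
    have h3 := ha _ h2
    rcases mul_eq_zero.mp h3 with h | h
    · exact absurd h hn
    · exact h
  let e : {a : Ω // IsFreePt u a} ≃ {a : Ω // IsFreePt u a} :=
    { toFun := fun a => ⟨v • a.val, hPv _ a.2⟩
      invFun := fun a => ⟨v⁻¹ • a.val, hPvinv _ a.2⟩
      left_inv := fun a => Subtype.ext (inv_smul_smul v a.val)
      right_inv := fun a => Subtype.ext (smul_inv_smul v a.val) }
  have hiff : ∀ a b : {a : Ω // IsFreePt u a},
      (orbSetoid Ω u m) a b ↔ (orbSetoid Ω u n) (e a) (e b) := by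
    intro a b
    constructor
    · rintro ⟨j, hj⟩
      refine ⟨j, ?_⟩
      show u ^ (n * j) • (v • a.val) = v • b.val
      rw [key', hj]
    · rintro ⟨j, hj⟩
      refine ⟨j, ?_⟩
      have h1 : u ^ (n * j) • (v • a.val) = v • b.val := hj
      rw [key'] at h1
      exact smul_left_cancel v h1
  exact Nat.card_congr (Quotient.congr e hiff)

lemma finite_orbQ (s : ℕ) (b : Fin s → Ω)
    (hcov : ∀ ω : Ω, ∃ (j : Fin s) (k : ℤ), u ^ k • b j = ω) :
    Finite (OrbQ Ω u 1) := by
  classical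
  have hf : ∀ c : OrbQ Ω u 1, ∃ (j : Fin s) (k : ℤ), u ^ k • b j = c.out.val := fun c =>
    hcov c.out.val
  let f : OrbQ Ω u 1 → Fin s := fun c => (hf c).choose
  have hff : ∀ c, ∃ k : ℤ, u ^ k • b (f c) = c.out.val := fun c => (hf c).choose_spec
  have hinj : Function.Injective f := by
    intro c c' h
    obtain ⟨k, hk⟩ := hff c
    obtain ⟨k', hk'⟩ := hff c'
    rw [h] at hk
    have hr : (orbSetoid Ω u 1) c.out c'.out := by
      refine ⟨k' - k, ?_⟩
      have he : k' - k + k = k' := by omega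
      rw [one_mul, ← hk, ← hk', ← mul_smul, ← zpow_add, he]
    exact (Quotient.out_eq c).symm.trans ((Quotient.sound hr).trans (Quotient.out_eq c'))
  exact Finite.of_injective f hinj

lemma key_main (v : G) (m n : ℤ) (hm : m ≠ 0) (hn : n ≠ 0)
    (hmn : m.natAbs ≠ n.natAbs) (hrel : v * u ^ m * v⁻¹ = u ^ n)
    (s : ℕ) (b : Fin s → Ω) (hcov : ∀ ω : Ω, ∃ (j : Fin s) (k : ℤ), u ^ k • b j = ω)
    (ω0 : Ω) : ∃ d : ℤ, d ≠ 0 ∧ u ^ d • ω0 = ω0 := by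
  by_contra hcon
  push_neg at hcon
  have hfree : IsFreePt u ω0 := by
    intro j hj
    by_contra hj0
    exact hcon j hj0 hj
  haveI : Finite (OrbQ Ω u 1) := finite_orbQ Ω u s b hcov
  haveI : Nonempty (OrbQ Ω u 1) := ⟨Quotient.mk (orbSetoid Ω u 1) ⟨ω0, hfree⟩⟩
  have h1 : Nat.card (OrbQ Ω u m) = Nat.card (OrbQ Ω u n) :=
    card_orbQ_eq_conj Ω u v m n hm hn hrel
  rw [card_orbQ Ω u m hm, card_orbQ Ω u n hn] at h1
  have hc : Nat.card (OrbQ Ω u 1) ≠ 0 := Nat.card_ne_zero.mpr ⟨‹_›, ‹_›⟩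
  have h2 : m.natAbs = n.natAbs := by
    have := Nat.pos_of_ne_zero hc
    exact Nat.eq_of_mul_eq_mul_left this (by linarith [h1])
  exact hmn h2

end KeyLemma


lemma BS_relation (m n : ℤ) :
    (BS.t m n)⁻¹ * (BS.x m n) ^ m * BS.t m n = (BS.x m n) ^ n := by
  have hmem : (FreeGroup.of false)⁻¹ * (FreeGroup.of true) ^ m * FreeGroup.of false *
      ((FreeGroup.of true) ^ n)⁻¹ ∈ Subgroup.normalClosure (bsRel m n) :=
    Subgroup.subset_normalClosure (Set.mem_singleton _)
  have h1 : PresentedGroup.mk (bsRel m n)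
      ((FreeGroup.of false)⁻¹ * (FreeGroup.of true) ^ m * FreeGroup.of false *
        ((FreeGroup.of true) ^ n)⁻¹) = 1 := (QuotientGroup.eq_one_iff _).mpr hmem
  rw [map_mul, map_mul, map_mul, map_inv, map_inv, map_zpow, map_zpow] at h1
  have h2 : (BS.t m n)⁻¹ * (BS.x m n) ^ m * BS.t m n * ((BS.x m n) ^ n)⁻¹ = 1 := h1
  exact mul_inv_eq_one.mp h2

theorem power_of_x_mem_and_virtually_cyclic_of_coset_decomposition
    (m n : ℤ) (hm : m ≠ 0) (hn : n ≠ 0) (hco : IsCoprime m n) (hmn : |m| ≠ |n|)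
    (N : Subgroup (BS m n)) [N.Normal]
    (s : ℕ) (a : Fin s → BS m n)
    (hcover : ∀ g : BS m n, ∃ n₀ ∈ N, ∃ (p k : ℤ) (j : Fin s),
      g = n₀ * (BS.t m n) ^ p * a j * (BS.x m n) ^ k) :
    (∃ q : ℕ, 0 < q ∧ (BS.x m n) ^ q ∈ N) ∧
    ∃ C : Subgroup (BS m n ⧸ N), IsCyclic C ∧ C.FiniteIndex := by
  classical
  let π : BS m n →* BS m n ⧸ N := QuotientGroup.mk' N
  let xb : BS m n ⧸ N := π (BS.x m n)
  let tb : BS m n ⧸ N := π (BS.t m n)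
  have hrelQ : tb⁻¹ * xb ^ m * tb = xb ^ n := by
    have h := congrArg π (BS_relation m n)
    simpa only [map_mul, map_inv, map_zpow] using h
  let T : Subgroup (BS m n ⧸ N) := Subgroup.zpowers tb
  have hcov : ∀ ω : (BS m n ⧸ N) ⧸ T, ∃ (j : Fin s) (k : ℤ),
      xb ^ k • ((QuotientGroup.mk ((π (a j))⁻¹)) : (BS m n ⧸ N) ⧸ T) = ω := by
    intro ω
    refine QuotientGroup.induction_on ω ?_
    intro q
    obtain ⟨g, hg⟩ := QuotientGroup.mk'_surjective N q
    obtain ⟨n₀, hn₀, p, k, j, hdecomp⟩ := hcover g⁻¹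
    refine ⟨j, -k, ?_⟩
    have hπn₀ : π n₀ = 1 := (QuotientGroup.eq_one_iff n₀).mpr hn₀
    have h1 : (π g)⁻¹ = tb ^ p * π (a j) * xb ^ k := by
      have h := congrArg π hdecomp
      rw [map_inv] at h
      rw [h]
      simp only [map_mul, map_zpow, hπn₀, one_mul]
      rfl
    have hq : q = xb ^ (-k) * (π (a j))⁻¹ * tb ^ (-p) := by
      have h2 : q = π g := hg.symm
      rw [h2, ← inv_inv (π g), h1]
      simp [mul_inv_rev, zpow_neg, mul_assoc]
    show xb ^ (-k) • ((QuotientGroup.mk ((π (a j))⁻¹)) : (BS m n ⧸ N) ⧸ T)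
        = QuotientGroup.mk q
    rw [MulAction.Quotient.smul_mk, smul_eq_mul, hq]
    exact (QuotientGroup.mk_mul_of_mem _ (T.zpow_mem (Subgroup.mem_zpowers tb) (-p))).symm
  have hmn' : m.natAbs ≠ n.natAbs := by
    intro h
    apply hmn
    rw [Int.abs_eq_natAbs, Int.abs_eq_natAbs, h]
  obtain ⟨d, hd0, hd⟩ := key_main ((BS m n ⧸ N) ⧸ T) xb tb⁻¹ m n hm hn hmn'
      (by rw [inv_inv]; exact hrelQ) s (fun j => QuotientGroup.mk ((π (a j))⁻¹)) hcov
      ((1 : BS m n ⧸ N) : (BS m n ⧸ N) ⧸ T)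
  have hdT : xb ^ d ∈ T := by
    have h1 : ((xb ^ d : BS m n ⧸ N) : (BS m n ⧸ N) ⧸ T) = ((1 : BS m n ⧸ N) : (BS m n ⧸ N) ⧸ T) := by
      rw [MulAction.Quotient.smul_mk, smul_eq_mul, mul_one] at hd
      exact hd
    have h2 := QuotientGroup.eq.mp h1
    rw [mul_one] at h2
    exact (Subgroup.inv_mem_iff T).mp h2
  obtain ⟨e, he⟩ := Subgroup.mem_zpowers_iff.mp hdT
  have hxz : xb ^ ((m - n) * d) = 1 := by
    have h1 : tb⁻¹ * xb ^ (m * d) * tb = xb ^ (n * d) := by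
      calc tb⁻¹ * xb ^ (m * d) * tb
          = tb⁻¹ * (xb ^ m) ^ d * (tb⁻¹)⁻¹ := by rw [zpow_mul, inv_inv]
        _ = (tb⁻¹ * xb ^ m * (tb⁻¹)⁻¹) ^ d := (conj_zpow).symm
        _ = (xb ^ n) ^ d := by rw [inv_inv, hrelQ]
        _ = xb ^ (n * d) := by rw [← zpow_mul]
    have hx : xb ^ (m * d) = tb ^ (e * m) := by
      rw [mul_comm m d, zpow_mul, ← he, ← zpow_mul, mul_comm]
    have h2 : tb⁻¹ * xb ^ (m * d) * tb = xb ^ (m * d) := by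
      rw [hx]
      group
    have h3 : xb ^ (m * d) = xb ^ (n * d) := by rw [← h2, h1]
    calc xb ^ ((m - n) * d) = xb ^ (m * d - n * d) := by ring_nf
      _ = xb ^ (m * d) * (xb ^ (n * d))⁻¹ := by rw [zpow_sub]
      _ = 1 := by rw [h3]; group
  have hmnsub : m - n ≠ 0 := by
    intro h
    apply hmn
    have hmn2 : m = n := by omega
    rw [hmn2]
  have hz0 : (m - n) * d ≠ 0 := mul_ne_zero hmnsub hd0
  set z : ℤ := (m - n) * d with hzdef
  have hzpos : 0 < z.natAbs := Int.natAbs_pos.mpr hz0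
  have hxq : xb ^ ((z.natAbs : ℕ) : ℤ) = 1 := by
    rcases Int.natAbs_eq z with h | h
    · rw [← h]
      exact hxz
    · have h' : ((z.natAbs : ℕ) : ℤ) = -z := by omega
      rw [h', zpow_neg, hxz, inv_one]
  constructor
  · refine ⟨z.natAbs, hzpos, ?_⟩
    have hπ : π ((BS.x m n) ^ z.natAbs) = 1 := by
      rw [map_pow, ← zpow_natCast]
      exact hxq
    exact (QuotientGroup.eq_one_iff _).mp hπ
  · refine ⟨T, ?_, ?_⟩
    · exact ⟨⟨⟨tb, Subgroup.mem_zpowers tb⟩, fun y => by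
        obtain ⟨k, hk⟩ := Subgroup.mem_zpowers_iff.mp y.2
        exact Subgroup.mem_zpowers_iff.mpr ⟨k, Subtype.ext (by simpa using hk)⟩⟩⟩
    · haveI : NeZero z.natAbs := ⟨by omega⟩
      have hsurj : Function.Surjective (fun pr : Fin s × ZMod z.natAbs =>
          ((QuotientGroup.mk (xb ^ ((pr.2.val : ℕ) : ℤ) * (π (a pr.1))⁻¹)) :
            (BS m n ⧸ N) ⧸ T)) := by
        intro ω
        obtain ⟨j, k, hk⟩ := hcov ω
        refine ⟨⟨j, ((k : ZMod z.natAbs))⟩, ?_⟩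
        simp only
        rw [← hk, MulAction.Quotient.smul_mk, smul_eq_mul]
        congr 2
        have hmod : (((((k : ZMod z.natAbs)).val : ℕ)) : ℤ) = k % (z.natAbs : ℤ) :=
          ZMod.val_intCast k
        rw [hmod]
        conv_rhs => rw [← Int.mul_ediv_add_emod k ((z.natAbs : ℕ) : ℤ)]
        rw [zpow_add, zpow_mul, hxq, one_zpow, one_mul]
      haveI : Finite ((BS m n ⧸ N) ⧸ T) := Finite.of_surjective _ hsurj
      exact Subgroup.finiteIndex_of_finite_quotient (H := T)
end
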